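/- Let w = (70, 0, 1, 2, 3, ..., 24) ∈ II_{1,25} (so w is the vector whose 0-th coordinate is 70 and whose i-th coordinate is i−1 for 1 ≤ i ≤ 25; it satisfies w·w = 0). Then there is no vector x ∈ II_{1,25} with x·w = 0 and x·x = −2. (Equivalently, the quotient lattice (w^⊥ ∩ II_{1,25})/ℤw — the Leech lattice — contains no vectors of square −2.) -/

import Mathlib

def cands (r : ℤ) : List ℤ := [r - 280, r - 140, r, r + 140]
def minsq (r : ℤ) : ℤ := ((cands r).map fun e => e * e).foldr min 39201
def sufmin : List ℤ → ℤ
  | [] => 0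
  | r :: rs => minsq (r % 140) + sufmin rs
def dfs : List ℤ → ℤ → ℤ → ℤ → ℤ → Bool
  | [], _, B, s1, s2 => B == 0 && s1 == 0 && s2 % 280 == 0
  | r :: rs, i, B, s1, s2 =>
    (cands (r % 140)).any fun e =>
      decide (e * e + sufmin rs ≤ B) && dfs rs (i + 1) (B - e * e) (s1 + i * e) (s2 + e)
def wsum : ℤ → List ℤ → ℤ
  | _, [] => 0
  | i, e :: es => i * e + wsum (i + 1) es

lemma foldr_min_le {l : List ℤ} {x : ℤ} (init : ℤ) (hx : x ∈ l) :
    l.foldr min init ≤ x := by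
  induction l with
  | nil => cases hx
  | cons a t ih =>
    rcases List.mem_cons.1 hx with rfl | hx
    · exact min_le_left _ _
    · exact le_trans (min_le_right _ _) (ih hx)

lemma mem_cands (e r : ℤ) (h : (e - r) % 140 = 0) (he : e * e ≤ 39200) :
    e ∈ cands (r % 140) := by
  have h1 : e ≤ 197 := by nlinarith
  have h2 : -197 ≤ e := by nlinarith
  simp only [cands, List.mem_cons, List.not_mem_nil, or_false]
  omega

lemma minsq_le {e r : ℤ} (h : e ∈ cands r) : minsq r ≤ e * e :=
  foldr_min_le _ (List.mem_map_of_mem (f := fun e => e * e) h)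

lemma sufmin_le {es rs : List ℤ}
    (hf : List.Forall₂ (fun e r => (e - r) % 140 = 0) es rs) :
    (∀ a ∈ es, a * a ≤ 39200) → sufmin rs ≤ (es.map fun a => a * a).sum := by
  induction hf with
  | nil => intro _; simp [sufmin]
  | @cons e r es' rs' h1 h2 ih =>
    intro h39
    have hm := minsq_le (mem_cands e r h1 (h39 e (by simp)))
    have ht := ih (fun a ha => h39 a (by simp [ha]))
    simp only [List.map_cons, List.sum_cons, sufmin]
    omega

lemma dfs_complete {es rs : List ℤ}
    (hf : List.Forall₂ (fun e r => (e - r) % 140 = 0) es rs) :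
    (∀ a ∈ es, a * a ≤ 39200) →
    ∀ i B s1 s2 : ℤ,
    (es.map fun a => a * a).sum = B →
    s1 + wsum i es = 0 →
    (s2 + es.sum) % 280 = 0 →
    dfs rs i B s1 s2 = true := by
  induction hf with
  | nil =>
    intro _ i B s1 s2 hB hs1 hs2
    simp only [List.map_nil, List.sum_nil] at hB hs2
    rw [wsum] at hs1
    rw [dfs]
    simp only [Bool.and_eq_true, beq_iff_eq]
    refine ⟨⟨by omega, by omega⟩, by omega⟩
  | @cons e r es' rs' h1 h2 ih =>
    intro h39 i B s1 s2 hB hs1 hs2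
    have he2 : e * e ≤ 39200 := h39 e (by simp)
    have hrest : ∀ a ∈ es', a * a ≤ 39200 := fun a ha => h39 a (by simp [ha])
    rw [dfs, List.any_eq_true]
    refine ⟨e, mem_cands e r h1 he2, ?_⟩
    rw [List.map_cons, List.sum_cons] at hB
    rw [Bool.and_eq_true, decide_eq_true_eq]
    constructor
    · have := sufmin_le h2 hrest
      omega
    · apply ih hrest
      · omega
      · rw [wsum] at hs1; linarith
      · rw [List.sum_cons] at hs2
        have h3 : s2 + e + es'.sum = s2 + (e + es'.sum) := by ring
        rw [h3]; exact hs2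

lemma wsum_ofFn : ∀ (n : ℕ) (i : ℤ) (f : Fin n → ℤ),
    wsum i (List.ofFn f) = ∑ j : Fin n, (i + ((j : ℕ) : ℤ)) * f j := by
  intro n
  induction n with
  | zero => intro i f; simp [wsum]
  | succ n ih =>
    intro i f
    rw [List.ofFn_succ, wsum, ih, Fin.sum_univ_succ]
    congr 1
    · simp
    · exact Finset.sum_congr rfl fun j _ => by
        rw [Fin.val_succ]; push_cast; ring

lemma forall₂_ofFn {R : ℤ → ℤ → Prop} : ∀ (n : ℕ) (f g : Fin n → ℤ),
    (∀ i, R (f i) (g i)) → List.Forall₂ R (List.ofFn f) (List.ofFn g) := by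
  intro n
  induction n with
  | zero => intro f g _; simp [List.ofFn_zero]
  | succ n ih =>
    intro f g h
    rw [List.ofFn_succ, List.ofFn_succ]
    exact List.Forall₂.cons (h 0) (ih _ _ fun i => h i.succ)

lemma sum_fin25 : ∑ i : Fin 25, ((i : ℕ) : ℤ) = 300 := by decide

lemma sumsq_fin25 : ∑ i : Fin 25, ((i : ℕ) : ℤ) * ((i : ℕ) : ℤ) = 4900 := by decide

set_option maxRecDepth 100000 in
set_option maxHeartbeats 4000000 in
lemma dfs_all_false : ∀ m : ℕ, m < 140 →
    dfs (List.ofFn fun i : Fin 25 => ((m : ℤ) * (70 - ((i : ℕ) : ℤ)))) 0 39200 0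
      (230 * (m : ℤ)) = false := by
  decide

/-!
The Leech lattice, realized as `(w^⊥ ∩ II₁,₂₅)/ℤw` for the isotropic Weyl
vector `w = (70, 0, 1, 2, …, 24)`, contains no vectors of square `-2`:
there is no `x ∈ II₁,₂₅` with `x·w = 0` and `x·x = -2`.

`II₁,₂₅` is realized inside `ℚ²⁶` as the set of vectors whose coordinates are
either all integers or all half-integers, and with
`x₀ - (x₁ + ⋯ + x₂₅) ∈ 2ℤ`; the bilinear form is
`x·y = x₀y₀ - x₁y₁ - ⋯ - x₂₅y₂₅`.
-/

/-- The Lorentzian bilinear form of signature `(1, 25)`. -/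
def lorentzDot (x y : Fin 26 → ℚ) : ℚ :=
  x 0 * y 0 - ∑ i : Fin 25, x i.succ * y i.succ

/-- Membership in the even unimodular Lorentzian lattice `II₁,₂₅ ⊂ ℚ²⁶`. -/
def MemII (x : Fin 26 → ℚ) : Prop :=
  ((∀ i, ∃ n : ℤ, x i = n) ∨ (∀ i, ∃ n : ℤ, x i = n + 1 / 2)) ∧
  (∃ k : ℤ, x 0 - ∑ i : Fin 25, x i.succ = 2 * k)

/-- The isotropic vector `w = (70, 0, 1, 2, …, 24)`. -/
def w : Fin 26 → ℚ := fun i => if i = 0 then 70 else ((i : ℕ) : ℚ) - 1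

/-- There is no vector `x ∈ II₁,₂₅` with `x·w = 0` and `x·x = -2`; equivalently
the Leech lattice `(w^⊥ ∩ II₁,₂₅)/ℤw` has no vectors of square `-2`. -/
theorem leech_no_roots :
    ¬ ∃ x : Fin 26 → ℚ, MemII x ∧ lorentzDot x w = 0 ∧ lorentzDot x x = -2 := by
  rintro ⟨x, ⟨hint, k, hk⟩, hw, hxx⟩
  obtain ⟨y, hy, hpar⟩ :
      ∃ y : Fin 26 → ℤ, (∀ i, x i = (y i : ℚ) / 2) ∧ (∀ i, y i % 2 = y 0 % 2) := by
    rcases hint with h | h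
    · choose n hn using h
      exact ⟨fun i => 2 * n i, fun i => by rw [hn i]; push_cast; ring,
        fun i => by show (2 * n i) % 2 = (2 * n 0) % 2; omega⟩
    · choose n hn using h
      exact ⟨fun i => 2 * n i + 1, fun i => by rw [hn i]; push_cast; ring,
        fun i => by show (2 * n i + 1) % 2 = (2 * n 0 + 1) % 2; omega⟩
  have hw0 : w 0 = 70 := by simp [w]
  have hwsucc : ∀ i : Fin 25, w i.succ = ((i : ℕ) : ℚ) := by
    intro i
    have h0 : i.succ ≠ (0 : Fin 26) := Fin.succ_ne_zero i
    simp only [w, if_neg h0, Fin.val_succ]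
    push_cast; ring
  simp only [lorentzDot, hw0] at hw
  simp only [hwsucc] at hw
  simp only [lorentzDot] at hxx
  -- integer versions
  have H1 : 70 * y 0 = ∑ i : Fin 25, ((i : ℕ) : ℤ) * y i.succ := by
    have h2 : ∑ i : Fin 25, x i.succ * ((i : ℕ) : ℚ)
        = ((∑ i : Fin 25, ((i : ℕ) : ℤ) * y i.succ : ℤ) : ℚ) / 2 := by
      push_cast
      rw [Finset.sum_div]
      exact Finset.sum_congr rfl fun i _ => by rw [hy i.succ]; ring
    rw [h2, hy 0] at hw
    have h3 : ((70 * y 0 : ℤ) : ℚ) = ((∑ i : Fin 25, ((i : ℕ) : ℤ) * y i.succ : ℤ) : ℚ) := by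
      push_cast at hw ⊢
      linarith
    exact_mod_cast h3
  have H2 : ∑ i : Fin 25, y i.succ * y i.succ = y 0 * y 0 + 8 := by
    have h2 : ∑ i : Fin 25, x i.succ * x i.succ
        = ((∑ i : Fin 25, y i.succ * y i.succ : ℤ) : ℚ) / 4 := by
      push_cast
      rw [Finset.sum_div]
      exact Finset.sum_congr rfl fun i _ => by rw [hy i.succ]; ring
    rw [h2, hy 0] at hxx
    have h3 : ((∑ i : Fin 25, y i.succ * y i.succ : ℤ) : ℚ) = ((y 0 * y 0 + 8 : ℤ) : ℚ) := by
      push_cast at hxx ⊢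
      linarith
    exact_mod_cast h3
  have H3 : y 0 - ∑ i : Fin 25, y i.succ = 4 * k := by
    have h2 : ∑ i : Fin 25, x i.succ = ((∑ i : Fin 25, y i.succ : ℤ) : ℚ) / 2 := by
      push_cast
      rw [Finset.sum_div]
      exact Finset.sum_congr rfl fun i _ => by rw [hy i.succ]
    rw [h2, hy 0] at hk
    have h3 : ((y 0 - ∑ i : Fin 25, y i.succ : ℤ) : ℚ) = ((4 * k : ℤ) : ℚ) := by
      push_cast at hk ⊢
      linarith
    exact_mod_cast h3
  -- translate by a multiple of w so that c = y 0 mod 140 ∈ [0, 140)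
  set t : ℤ := y 0 / 140 with ht
  set c : ℤ := y 0 % 140 with hcdef
  have hc : y 0 = 140 * t + c := by omega
  have hc0 : 0 ≤ c := by omega
  have hc1 : c < 140 := by omega
  set a : Fin 25 → ℤ := fun i => y i.succ - 2 * ((i : ℕ) : ℤ) * t with ha
  have S1 : ∑ i : Fin 25, ((i : ℕ) : ℤ) * a i = 70 * c := by
    have hE : ∑ i : Fin 25, ((i : ℕ) : ℤ) * a i
        = ∑ i : Fin 25, (((i : ℕ) : ℤ) * y i.succ
            - 2 * t * (((i : ℕ) : ℤ) * ((i : ℕ) : ℤ))) :=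
      Finset.sum_congr rfl fun i _ => by simp only [ha]; ring
    rw [hE, Finset.sum_sub_distrib, ← Finset.mul_sum, ← H1, sumsq_fin25]
    omega
  have S2 : ∑ i : Fin 25, a i * a i = c * c + 8 := by
    have hE : ∑ i : Fin 25, a i * a i
        = ∑ i : Fin 25, (y i.succ * y i.succ
            - 4 * t * (((i : ℕ) : ℤ) * y i.succ)
            + 4 * (t * t) * (((i : ℕ) : ℤ) * ((i : ℕ) : ℤ))) :=
      Finset.sum_congr rfl fun i _ => by simp only [ha]; ring
    rw [hE, Finset.sum_add_distrib, Finset.sum_sub_distrib, ← Finset.mul_sum, ← Finset.mul_sum,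
        ← H1, H2, sumsq_fin25]
    rw [hc]; ring
  have S3 : ∃ k' : ℤ, c - ∑ i : Fin 25, a i = 4 * k' := by
    refine ⟨k + 115 * t, ?_⟩
    have hE : ∑ i : Fin 25, a i
        = ∑ i : Fin 25, y i.succ - 2 * t * ∑ i : Fin 25, ((i : ℕ) : ℤ) := by
      rw [Finset.mul_sum, ← Finset.sum_sub_distrib]
      exact Finset.sum_congr rfl fun i _ => by simp only [ha]; ring
    rw [hE, sum_fin25]
    omega
  have S4 : ∀ i : Fin 25, (a i - c) % 2 = 0 := by
    intro i
    have h1 := hpar i.succ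
    obtain ⟨m, hm⟩ : ∃ m : ℤ, a i = y i.succ - 2 * m :=
      ⟨((i : ℕ) : ℤ) * t, by simp only [ha]; ring⟩
    omega
  set e : Fin 25 → ℤ := fun i => 70 * a i - c * ((i : ℕ) : ℤ) with he
  have E4 : ∀ i : Fin 25, (e i - c * (70 - ((i : ℕ) : ℤ))) % 140 = 0 := by
    intro i
    have h1 : e i - c * (70 - ((i : ℕ) : ℤ)) = 70 * (a i - c) := by simp only [he]; ring
    have h2 := S4 i
    omega
  have E1 : ∑ i : Fin 25, e i * e i = 39200 := by
    have hE : ∑ i : Fin 25, e i * e i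
        = ∑ i : Fin 25, (4900 * (a i * a i)
            - 140 * c * (((i : ℕ) : ℤ) * a i)
            + c * c * (((i : ℕ) : ℤ) * ((i : ℕ) : ℤ))) :=
      Finset.sum_congr rfl fun i _ => by simp only [he]; ring
    rw [hE, Finset.sum_add_distrib, Finset.sum_sub_distrib, ← Finset.mul_sum, ← Finset.mul_sum,
        ← Finset.mul_sum, S1, S2, sumsq_fin25]
    ring
  have E2 : ∑ i : Fin 25, ((i : ℕ) : ℤ) * e i = 0 := by
    have hE : ∑ i : Fin 25, ((i : ℕ) : ℤ) * e i
        = ∑ i : Fin 25, (70 * (((i : ℕ) : ℤ) * a i)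
            - c * (((i : ℕ) : ℤ) * ((i : ℕ) : ℤ))) :=
      Finset.sum_congr rfl fun i _ => by simp only [he]; ring
    rw [hE, Finset.sum_sub_distrib, ← Finset.mul_sum, ← Finset.mul_sum, S1, sumsq_fin25]
    ring
  have E3 : (230 * c + ∑ i : Fin 25, e i) % 280 = 0 := by
    obtain ⟨k', hk'⟩ := S3
    have hE : ∑ i : Fin 25, e i
        = 70 * ∑ i : Fin 25, a i - c * ∑ i : Fin 25, ((i : ℕ) : ℤ) := by
      rw [Finset.mul_sum, Finset.mul_sum, ← Finset.sum_sub_distrib]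
    rw [hE, sum_fin25]
    omega
  have E5 : ∀ i : Fin 25, e i * e i ≤ 39200 := by
    intro i
    rw [← E1]
    exact Finset.single_le_sum (f := fun j => e j * e j)
      (fun j _ => mul_self_nonneg _) (Finset.mem_univ i)
  have htrue : dfs (List.ofFn fun i : Fin 25 => c * (70 - ((i : ℕ) : ℤ))) 0 39200 0
      (230 * c) = true := by
    apply dfs_complete (es := List.ofFn e) (forall₂_ofFn 25 _ _ fun i => E4 i)
    · intro a' ha'
      rw [List.mem_ofFn] at ha'
      obtain ⟨i, rfl⟩ := ha'
      exact E5 i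
    · rw [List.map_ofFn, List.sum_ofFn]
      simpa using E1
    · rw [zero_add, wsum_ofFn]
      simpa using E2
    · rw [List.sum_ofFn]; exact E3
  have hfalse := dfs_all_false c.toNat (by omega)
  have hcn : ((c.toNat : ℕ) : ℤ) = c := by omega
  simp only [hcn] at hfalse
  rw [htrue] at hfalse
  exact absurd hfalse (by decide)
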